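/- arXiv:2503.16783 — 2 statements merged into one kernel-verified Lean document; each statement's English description precedes it below -/
import Mathlib

section
/- Let f be a natural number, let V be a finite set with |V| = 3f + 1, and let C ⊆ V with |C| = f + 1. Let Q₁, Q₂ ⊆ V be such that Q₁ ∩ C and Q₂ ∩ C are disjoint. If 2·|Q₁| ≥ 5f + 2 (i.e., |Q₁| ≥ 2f + f/2 + 1), then |Q₂| < |Q₁|. -/
/-- Strongest ledger: with `3f+1` validators, `f+1` of which are correct (`C`), if
the correct signers of two ledgers are disjoint and one ledger has at least
`2f + f/2 + 1` signatures (i.e., `2·|Q₁| ≥ 5f+2`), the other has strictly fewer. -/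
theorem strongest_ledger_unique {α : Type*} [DecidableEq α] (f : ℕ)
    (V C Q₁ Q₂ : Finset α)
    (hV : V.card = 3 * f + 1)
    (hCV : C ⊆ V) (hC : C.card = f + 1)
    (hQ₁V : Q₁ ⊆ V) (hQ₂V : Q₂ ⊆ V)
    (hdisj : Disjoint (Q₁ ∩ C) (Q₂ ∩ C))
    (h₁ : 5 * f + 2 ≤ 2 * Q₁.card) :
    Q₂.card < Q₁.card := by
  have h2 : (Q₁ ∩ C).card + (Q₁ ∪ C).card = Q₁.card + C.card :=
    Finset.card_inter_add_card_union Q₁ C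
  have h3 : (Q₁ ∪ C).card ≤ V.card :=
    Finset.card_le_card (Finset.union_subset hQ₁V hCV)
  have h4 : (Q₁ ∩ C).card + (Q₂ ∩ C).card ≤ C.card := by
    rw [← Finset.card_union_of_disjoint hdisj]
    exact Finset.card_le_card (Finset.union_subset (Finset.inter_subset_right)
      (Finset.inter_subset_right))
  have h5 : (Q₂ ∩ C).card + (Q₂ \ C).card = Q₂.card :=
    Finset.card_inter_add_card_sdiff Q₂ C
  have h6 : (Q₂ \ C).card ≤ (V \ C).card :=
    Finset.card_le_card (Finset.sdiff_subset_sdiff hQ₂V le_rfl)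
  have h7 : (V \ C).card = V.card - C.card := Finset.card_sdiff_of_subset hCV
  omega
end

section
/- Let f and m be natural numbers with 1 ≤ f and m ≤ f − 1. Then f ≤ (m + 1)·(f − m). Consequently, for every real C ≥ 0, (((f + m + 1)/(m + 1)) − 1) · (C/(f − m)) ≤ C (with f, m regarded as real numbers). -/
lemma fork_aux (f m : ℕ) (hf : 1 ≤ f) (hm : m ≤ f - 1) : f ≤ (m + 1) * (f - m) := by
  have hmf : m < f := lt_of_le_of_lt hm (Nat.sub_lt hf one_pos)
  calc f = m + (f - m) := by omega
    _ ≤ m * (f - m) + (f - m) := by exact Nat.add_le_add_right (Nat.le_mul_of_pos_right m (by omega)) _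
    _ = (m + 1) * (f - m) := by ring


/-- With `Γ = (f+m+1)/(m+1)` conflicting ledgers and `f − m` rational validators
sharing the collateral bound `C` per ledger, the benefit `(Γ − 1)·C/(f − m)` is
bounded by `C`, since `f ≤ (m+1)·(f−m)` for `m ≤ f − 1`. -/
theorem fork_benefit_bounded (f m : ℕ) (hf : 1 ≤ f) (hm : m ≤ f - 1) :
    f ≤ (m + 1) * (f - m) ∧
    ∀ C : ℝ, 0 ≤ C →
      (((f : ℝ) + m + 1) / ((m : ℝ) + 1) - 1) * (C / ((f : ℝ) - m)) ≤ C := by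
  have hmf : m < f := lt_of_le_of_lt hm (Nat.sub_lt hf one_pos)
  refine ⟨fork_aux f m hf hm, ?_⟩
  · intro C hC
    have hmr : (0:ℝ) < (m:ℝ) + 1 := by positivity
    have hfm : (0:ℝ) < (f:ℝ) - (m:ℝ) := by
      have : (m:ℝ) < f := by exact_mod_cast hmf
      linarith
    have key : (((f : ℝ) + m + 1) / ((m : ℝ) + 1) - 1) = (f:ℝ) / ((m:ℝ) + 1) := by
      field_simp
      ring
    rw [key]
    rw [div_mul_div_comm]
    rw [div_le_iff₀ (by positivity)]
    have hN : (f:ℝ) ≤ ((m:ℝ)+1) * ((f:ℝ)-(m:ℝ)) := by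
      have := (fork_aux f m hf hm)
      have : ((f:ℝ)) ≤ ((m+1) * (f-m) : ℕ) := by exact_mod_cast this
      rwa [Nat.cast_mul, Nat.cast_add, Nat.cast_one, Nat.cast_sub hmf.le] at this
    nlinarith
end
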